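/- (Picard–Queyranne) Let (G, c) be a network with source s and sink t and let f be a maximum s-t flow. Then an s-t cut S (with s ∈ S, t ∉ S) is a minimum cut if and only if S is a closed set in the residual graph G_f, i.e., no edge of G_f leaves S. -/

import Mathlib

open Finset

private lemma pq_count_sum_snd {V : Type*} [Fintype V] [DecidableEq V] (v : V) :
    ∀ E : List (V × V), ∑ u, ((E.count (u, v) : ℝ)) = ((E.map Prod.snd).count v : ℝ) := by
  intro E
  induction E with
  | nil => simp
  | cons a E ih =>
    obtain ⟨x, y⟩ := a
    simp only [List.count_cons, List.map_cons]
    push_cast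
    rw [Finset.sum_add_distrib, ih]
    congr 1
    rcases eq_or_ne y v with h | h
    · subst h
      simp [Prod.ext_iff]
    · simp [Prod.ext_iff, h]

private lemma pq_count_sum_fst {V : Type*} [Fintype V] [DecidableEq V] (v : V) :
    ∀ E : List (V × V), ∑ u, ((E.count (v, u) : ℝ)) = ((E.map Prod.fst).count v : ℝ) := by
  intro E
  induction E with
  | nil => simp
  | cons a E ih =>
    obtain ⟨x, y⟩ := a
    simp only [List.count_cons, List.map_cons]
    push_cast
    rw [Finset.sum_add_distrib, ih]
    congr 1
    rcases eq_or_ne x v with h | h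
    · subst h
      simp [Prod.ext_iff]
    · simp [Prod.ext_iff, h]

private lemma pq_map_fst_zip_tail {V : Type*} :
    ∀ p : List V, (p.zip p.tail).map Prod.fst = p.dropLast := by
  intro p
  induction p with
  | nil => simp
  | cons a l ih =>
    cases l with
    | nil => simp
    | cons b l' =>
      simp only [List.tail_cons] at ih ⊢
      simp only [List.zip_cons_cons, List.map_cons, List.dropLast_cons₂]
      simpa using ih

private lemma pq_map_snd_zip_tail {V : Type*} :
    ∀ p : List V, (p.zip p.tail).map Prod.snd = p.tail := by
  intro p
  cases p with
  | nil => simp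
  | cons a l =>
    simp only [List.tail_cons]
    apply List.map_snd_zip
    simp

private lemma pq_chain_mem {V : Type*} {R : V → V → Prop} :
    ∀ (a : V) (l : List V), List.Chain R a l → ∀ q ∈ (a :: l).zip l, R q.1 q.2 := by
  intro a l
  induction l generalizing a with
  | nil => intro _ q hq; simp at hq
  | cons b l' ih =>
    intro h q hq
    replace h : R a b ∧ List.Chain R b l' := List.isChain_cons_cons.mp h
    rw [List.zip_cons_cons, List.mem_cons] at hq
    rcases hq with rfl | hq
    · exact h.1
    · exact ih b h.2 q hq

private lemma pq_count_dropLast {V : Type*} [DecidableEq V] (l : List V) (hl : l ≠ []) (v : V) :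
    l.dropLast.count v + (if l.getLast hl = v then 1 else 0) = l.count v := by
  conv_rhs => rw [← List.dropLast_append_getLast hl]
  rw [List.count_append]
  simp [List.count_cons]

private lemma pq_no_augment {V : Type*} [Fintype V] [DecidableEq V]
    (c : V → V → ℝ) (hc : ∀ u v, 0 ≤ c u v) (s t : V) (hst : s ≠ t)
    (f : V → V → ℝ) (hf0 : ∀ u v, 0 ≤ f u v) (hfc : ∀ u v, f u v ≤ c u v)
    (hcons : ∀ v, v ≠ s → v ≠ t → ∑ u, f u v = ∑ u, f v u)
    (hmax : ∀ g : V → V → ℝ, (∀ u v, 0 ≤ g u v) → (∀ u v, g u v ≤ c u v) →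
      (∀ v, v ≠ s → v ≠ t → ∑ u, g u v = ∑ u, g v u) →
      (∑ v, g s v) - (∑ v, g v s) ≤ (∑ v, f s v) - (∑ v, f v s)) :
    ¬ Relation.ReflTransGen (fun u v => f u v - f v u < c u v) s t := by
  classical
  intro hreach
  obtain ⟨l, hchain, hlast⟩ := List.exists_isChain_cons_of_relationReflTransGen hreach
  have hlne : l ≠ [] := by rintro rfl; exact hst hlast
  set E : List (V × V) := (s :: l).zip l with hE
  have hEmem : ∀ q ∈ E, f q.1 q.2 - f q.2 q.1 < c q.1 q.2 := by
    rw [hE]; exact pq_chain_mem s l hchain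
  have hEne : E ≠ [] := by
    obtain ⟨b, l', rfl⟩ := List.exists_cons_of_ne_nil hlne
    simp [hE]
  have hLpos : (0:ℝ) < E.length := by
    have := List.length_pos_iff.mpr hEne
    exact_mod_cast this
  set P : Finset (V × V) :=
    Finset.univ.filter (fun q : V × V => f q.1 q.2 - f q.2 q.1 < c q.1 q.2) with hP
  have hPne : P.Nonempty := ⟨E.head hEne, by
    rw [hP, Finset.mem_filter]
    exact ⟨Finset.mem_univ _, hEmem _ (List.head_mem hEne)⟩⟩
  set δ := P.inf' hPne (fun q => c q.1 q.2 - (f q.1 q.2 - f q.2 q.1)) with hδdef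
  have hδ : 0 < δ := by
    rw [hδdef]
    refine (Finset.lt_inf'_iff hPne).mpr (fun q hq => ?_)
    rw [hP, Finset.mem_filter] at hq
    linarith [hq.2]
  set ε := δ / E.length with hεdef
  have hε : 0 < ε := div_pos hδ hLpos
  set D : V → V → ℝ := fun u v => (E.count (u,v) : ℝ) - (E.count (v,u) : ℝ) with hD
  set F : V → V → ℝ := fun u v => (f u v - f v u) + ε * D u v with hF
  have hskew : ∀ u v, F v u = -F u v := by
    intro u v; simp only [hF, hD]; ring
  have hFle : ∀ u v, F u v ≤ c u v := by
    intro u v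
    rcases le_or_gt ((E.count (u,v) : ℝ)) (E.count (v,u)) with h | h
    · have hDle : D u v ≤ 0 := by rw [hD]; dsimp only; linarith
      have : ε * D u v ≤ 0 := mul_nonpos_of_nonneg_of_nonpos hε.le hDle
      have h1 := hf0 v u
      have h2 := hfc u v
      rw [hF]; dsimp only; linarith
    · have hcnt : 0 < E.count (u,v) := by
        have h0 : (0:ℝ) ≤ (E.count (v,u) : ℝ) := Nat.cast_nonneg _
        exact_mod_cast lt_of_le_of_lt h0 h
      have hmem : (u, v) ∈ E := List.count_pos_iff.mp hcnt
      have hR : f u v - f v u < c u v := hEmem (u,v) hmem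
      have hqP : (u,v) ∈ P := by rw [hP, Finset.mem_filter]; exact ⟨Finset.mem_univ _, hR⟩
      have hgap : δ ≤ c u v - (f u v - f v u) := by
        rw [hδdef]; exact Finset.inf'_le _ hqP
      have hDle : D u v ≤ (E.length : ℝ) := by
        rw [hD]; dsimp only
        have h1 : E.count (u,v) ≤ E.length := List.count_le_length
        have h2 : (0:ℝ) ≤ (E.count (v,u):ℝ) := Nat.cast_nonneg _
        have h3 : ((E.count (u,v) : ℕ) : ℝ) ≤ (E.length : ℝ) := by exact_mod_cast h1
        linarith
      have hεL : ε * (E.length : ℝ) = δ := by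
        rw [hεdef]; field_simp
      have hmul : ε * D u v ≤ δ := by
        calc ε * D u v ≤ ε * (E.length : ℝ) := by nlinarith [hε.le]
        _ = δ := hεL
      rw [hF]; dsimp only; linarith
  have hsnd : E.map Prod.snd = l := by
    rw [hE]; simpa using pq_map_snd_zip_tail (s :: l)
  have hfst : E.map Prod.fst = (s :: l).dropLast := by
    rw [hE]; simpa using pq_map_fst_zip_tail (s :: l)
  have hDsum : ∀ v, ∑ u, D u v = (if t = v then (1:ℝ) else 0) - (if s = v then 1 else 0) := by
    intro v
    simp only [hD]
    rw [Finset.sum_sub_distrib, pq_count_sum_snd, pq_count_sum_fst, hsnd, hfst]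
    have hne : (s :: l) ≠ [] := List.cons_ne_nil _ _
    have hgl : (s :: l).getLast hne = t := hlast
    have hcount := pq_count_dropLast (s :: l) hne v
    rw [hgl] at hcount
    have hcc : (s :: l).count v = l.count v + (if s = v then 1 else 0) := by
      simp [List.count_cons]
    rw [hcc] at hcount
    have hcountR : ((s :: l).dropLast.count v : ℝ) + (if t = v then (1:ℝ) else 0)
        = (l.count v : ℝ) + (if s = v then (1:ℝ) else 0) := by
      exact_mod_cast hcount
    linarith
  set g : V → V → ℝ := fun u v => max (F u v) 0 with hg
  have hg0 : ∀ u v, 0 ≤ g u v := fun u v => le_max_right _ _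
  have hgc : ∀ u v, g u v ≤ c u v := fun u v => max_le (hFle u v) (hc u v)
  have hgdiff : ∀ u v, g u v - g v u = F u v := by
    intro u v
    rw [hg]; dsimp only
    rw [hskew u v]
    rcases le_total 0 (F u v) with h | h
    · rw [max_eq_left h, max_eq_right (by linarith : -F u v ≤ 0)]; ring
    · rw [max_eq_right h, max_eq_left (by linarith : (0:ℝ) ≤ -F u v)]; ring
  have hFsum : ∀ v, ∑ u, F u v = ((∑ u, f u v) - (∑ u, f v u))
      + ε * ((if t = v then (1:ℝ) else 0) - (if s = v then 1 else 0)) := by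
    intro v
    simp only [hF]
    rw [Finset.sum_add_distrib, ← Finset.mul_sum, hDsum v, Finset.sum_sub_distrib]
  have hgcons : ∀ v, v ≠ s → v ≠ t → ∑ u, g u v = ∑ u, g v u := by
    intro v hvs hvt
    have h0 : ∑ u, (g u v - g v u) = 0 := by
      simp_rw [hgdiff]
      rw [hFsum v, hcons v hvs hvt]
      simp [Ne.symm hvs, Ne.symm hvt]
    rw [Finset.sum_sub_distrib] at h0
    linarith
  have hval : (∑ v, g s v) - (∑ v, g v s) = ((∑ v, f s v) - (∑ v, f v s)) + ε := by
    rw [← Finset.sum_sub_distrib]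
    calc ∑ v, (g s v - g v s) = ∑ v, F s v := by simp_rw [hgdiff]
      _ = ∑ v, -F v s := Finset.sum_congr rfl (fun v _ => by rw [hskew v s])
      _ = -∑ v, F v s := by rw [Finset.sum_neg_distrib]
      _ = ((∑ v, f s v) - (∑ v, f v s)) + ε := by
          rw [hFsum s]
          simp [Ne.symm hst]
          ring
  have := hmax g hg0 hgc hgcons
  rw [hval] at this
  linarith

private lemma pq_cut_value {V : Type*} [Fintype V] [DecidableEq V] (g : V → V → ℝ) (s t : V)
    (hcons : ∀ v, v ≠ s → v ≠ t → ∑ u, g u v = ∑ u, g v u)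
    (S' : Finset V) (hs : s ∈ S') (ht : t ∉ S') :
    (∑ v, g s v) - (∑ v, g v s) = ∑ u ∈ S', ∑ v ∈ S'ᶜ, (g u v - g v u) := by
  have key : (∑ v, g s v) - (∑ v, g v s) = ∑ w ∈ S', ((∑ v, g w v) - (∑ v, g v w)) := by
    rw [Finset.sum_eq_single_of_mem s hs]
    intro w hw hws
    have hwt : w ≠ t := fun h => ht (h ▸ hw)
    rw [hcons w hws hwt]; ring
  rw [key]
  have h1 : ∀ w, (∑ v, g w v) - (∑ v, g v w) = ∑ v, (g w v - g v w) :=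
    fun w => (Finset.sum_sub_distrib _ _).symm
  simp_rw [h1]
  have h2 : ∀ w, (∑ v, (g w v - g v w)) =
      (∑ v ∈ S', (g w v - g v w)) + ∑ v ∈ S'ᶜ, (g w v - g v w) :=
    fun w => (Finset.sum_add_sum_compl S' _).symm
  simp_rw [h2]
  rw [Finset.sum_add_distrib]
  have h3 : ∑ w ∈ S', ∑ v ∈ S', (g w v - g v w) = 0 := by
    simp only [Finset.sum_sub_distrib]
    rw [Finset.sum_comm]
    exact sub_self _
  rw [h3, zero_add]

theorem stmt15 {V : Type*} [Fintype V] [DecidableEq V]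
    (c : V → V → ℝ) (hc : ∀ u v, 0 ≤ c u v) (s t : V) (hst : s ≠ t)
    (f : V → V → ℝ)
    (hf0 : ∀ u v, 0 ≤ f u v) (hfc : ∀ u v, f u v ≤ c u v)
    (hcons : ∀ v, v ≠ s → v ≠ t → ∑ u, f u v = ∑ u, f v u)
    -- `f` is a maximum `s`-`t` flow:
    (hmax : ∀ g : V → V → ℝ, (∀ u v, 0 ≤ g u v) → (∀ u v, g u v ≤ c u v) →
      (∀ v, v ≠ s → v ≠ t → ∑ u, g u v = ∑ u, g v u) →
      (∑ v, g s v) - (∑ v, g v s) ≤ (∑ v, f s v) - (∑ v, f v s))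
    (S : Finset V) (hsS : s ∈ S) (htS : t ∉ S) :
    -- `S` is a minimum cut iff no residual edge leaves `S`.
    (∀ S' : Finset V, s ∈ S' → t ∉ S' →
        ∑ u ∈ S, ∑ v ∈ Sᶜ, c u v ≤ ∑ u ∈ S', ∑ v ∈ S'ᶜ, c u v) ↔
      (∀ u ∈ S, ∀ v, v ∉ S → ¬(f u v < c u v ∨ 0 < f v u)) := by
  classical
  have closed_eq : ∀ T : Finset V, s ∈ T → t ∉ T →
      (∀ u ∈ T, ∀ v, v ∉ T → ¬(f u v < c u v ∨ 0 < f v u)) →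
      ∑ u ∈ T, ∑ v ∈ Tᶜ, c u v = (∑ v, f s v) - (∑ v, f v s) := by
    intro T hsT htT hcl
    rw [pq_cut_value f s t hcons T hsT htT]
    refine Finset.sum_congr rfl (fun u hu => Finset.sum_congr rfl (fun v hv => ?_))
    rw [Finset.mem_compl] at hv
    have h := hcl u hu v hv
    push_neg at h
    have h1 : f u v = c u v := le_antisymm (hfc u v) h.1
    have h2 : f v u = 0 := le_antisymm h.2 (hf0 v u)
    rw [h1, h2]; ring
  constructor
  · intro hmin u huS v hvS
    set R : V → V → Prop := fun a b => f a b - f b a < c a b with hR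
    set Sr : Finset V := Finset.univ.filter (fun v => Relation.ReflTransGen R s v) with hSr
    have hsSr : s ∈ Sr := by
      rw [hSr, Finset.mem_filter]
      exact ⟨Finset.mem_univ _, Relation.ReflTransGen.refl⟩
    have htSr : t ∉ Sr := by
      rw [hSr, Finset.mem_filter]
      rintro ⟨-, hreach⟩
      exact pq_no_augment c hc s t hst f hf0 hfc hcons hmax hreach
    have hclSr : ∀ a ∈ Sr, ∀ b, b ∉ Sr → ¬(f a b < c a b ∨ 0 < f b a) := by
      intro a ha b hb hcontra
      apply hb
      rw [hSr, Finset.mem_filter] at ha ⊢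
      refine ⟨Finset.mem_univ _, ha.2.tail ?_⟩
      rw [hR]
      rcases hcontra with h | h
      · have := hf0 b a; linarith
      · have := hfc a b; linarith
    have h2 := hmin Sr hsSr htSr
    have h3 := closed_eq Sr hsSr htSr hclSr
    have h4 := pq_cut_value f s t hcons S hsS htS
    simp only [Finset.sum_sub_distrib] at h4
    have hsum0 : ∑ a ∈ S, ∑ b ∈ Sᶜ, (c a b - (f a b - f b a)) ≤ 0 := by
      simp only [Finset.sum_sub_distrib]
      linarith
    have hterm : ∀ a ∈ S, ∀ b ∈ Sᶜ, 0 ≤ c a b - (f a b - f b a) := by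
      intro a _ b _
      have := hfc a b; have := hf0 b a; linarith
    have hinner : ∀ a ∈ S, 0 ≤ ∑ b ∈ Sᶜ, (c a b - (f a b - f b a)) := fun a ha =>
      Finset.sum_nonneg (fun b hb => hterm a ha b hb)
    have h5 : ∑ b ∈ Sᶜ, (c u b - (f u b - f b u)) ≤
        ∑ a ∈ S, ∑ b ∈ Sᶜ, (c a b - (f a b - f b a)) :=
      Finset.single_le_sum hinner huS
    have h6 : c u v - (f u v - f v u) ≤ ∑ b ∈ Sᶜ, (c u b - (f u b - f b u)) :=
      Finset.single_le_sum (fun b hb => hterm u huS b hb) (Finset.mem_compl.mpr hvS)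
    rintro (h | h)
    · have := hf0 v u; linarith
    · have := hfc u v; linarith
  · intro hclosed S' hsS' htS'
    rw [closed_eq S hsS htS hclosed, pq_cut_value f s t hcons S' hsS' htS']
    refine Finset.sum_le_sum (fun a ha => Finset.sum_le_sum (fun b hb => ?_))
    have := hfc a b; have := hf0 b a; linarith
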